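/- Every W-suspension, given by data A' : 𝓤, B' : A' → 𝓤, C' : 𝓤, and l', r' : C' → A', is equivalent to the QW-type with signature A = A', B = B' and equations E = C', V c = B'(l' c) × B'(r' c), l c = σ(l' c, η ∘ π₁), r c = σ(r' c, η ∘ π₂) (i.e., each equation identifies the l'-node applied to the first projection of the variables with the r'-node applied to the second projection). -/

import Mathlib

universe u

/-- A signature `Σ = (A, B)` with operations `A` and arities `B`. -/
structure Sig : Type (u + 1) where
  A : Type u
  B : A → Type u

/-- The polynomial endofunctor `S_Σ(X) = Σ_{a:A} (B a → X)`. -/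
def SPoly (S : Sig.{u}) (X : Type u) : Type u := Σ a : S.A, S.B a → X

/-- Free `S_Σ`-algebra (terms) on variables `V`. -/
inductive Tm (S : Sig.{u}) (V : Type u) : Type u
  | η : V → Tm S V
  | σ : (a : S.A) → (S.B a → Tm S V) → Tm S V

/-- Bind `t ⋙ ρ` extending `ρ : V → X` along an algebra `α`. -/
def Tm.bind {S : Sig.{u}} {V X : Type u} (α : SPoly S X → X) (ρ : V → X) :
    Tm S V → X
  | .η v => ρ v
  | .σ a b => α ⟨a, fun x => (b x).bind α ρ⟩

/-- A system of equations over a signature. -/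
structure EqSys (S : Sig.{u}) : Type (u + 1) where
  E : Type u
  V : E → Type u
  l : (e : E) → Tm S (V e)
  r : (e : E) → Tm S (V e)

/-- An algebra `α` satisfies the system of equations `ε`. -/
def Sat {S : Sig.{u}} (ε : EqSys S) {X : Type u} (α : SPoly S X → X) : Prop :=
  ∀ (e : ε.E) (ρ : ε.V e → X), (ε.l e).bind α ρ = (ε.r e).bind α ρ

/-- A QW-type: an `S_Σ`-algebra satisfying `ε`, initial among such algebras. -/
structure QWType (S : Sig.{u}) (ε : EqSys S) : Type (u + 1) where
  QW : Type u
  intro : SPoly S QW → QW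
  equate : Sat ε intro
  qwrec : ∀ (X : Type u) (α : SPoly S X → X), Sat ε α → QW → X
  qwrechom : ∀ (X : Type u) (α : SPoly S X → X) (p : Sat ε α) (s : SPoly S QW),
    qwrec X α p (intro s) = α ⟨s.1, fun x => qwrec X α p (s.2 x)⟩
  qwuniq : ∀ (X : Type u) (α : SPoly S X → X) (p : Sat ε α) (f : QW → X),
    (∀ s : SPoly S QW, f (intro s) = α ⟨s.1, fun x => f (s.2 x)⟩) →
    qwrec X α p = f

/-- The signature of a W-suspension: `A = A'`, `B = B'`. -/
def wsSig (A' : Type u) (B' : A' → Type u) : Sig.{u} := ⟨A', B'⟩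

/-- The equations of a W-suspension: one equation per `c : C'`, whose
variables comprise a `B'(l' c)`-indexed family (first component) together
with a `B'(r' c)`-indexed family (second component); the left-hand side is
the `l'`-node applied to the first-component variables and the right-hand
side is the `r'`-node applied to the second-component variables. -/
def wsEqs (A' : Type u) (B' : A' → Type u) (C' : Type u) (l' r' : C' → A') :
    EqSys (wsSig A' B') where
  E := C'
  V := fun c => B' (l' c) ⊕ B' (r' c)
  l := fun c => .σ (l' c) (fun y => .η (Sum.inl y))
  r := fun c => .σ (r' c) (fun y => .η (Sum.inr y))

/-- every W-suspension, given by `A'`, `B'`, `C'`, `l'`, `r'`,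
is equivalent to the QW-type for the above signature and equations: the
QW-type has the `sup` point constructor, the W-suspension cells
`sup (l' c) φ = sup (r' c) ψ`, and is initial (homotopy-initial, at set
level) among all algebras with such cells. -/
theorem wsuspension_is_qw (A' : Type u) (B' : A' → Type u) (C' : Type u)
    (l' r' : C' → A') (Q : QWType (wsSig A' B') (wsEqs A' B' C' l' r')) :
    (∀ (c : C') (φ : B' (l' c) → Q.QW) (ψ : B' (r' c) → Q.QW),
      Q.intro ⟨l' c, φ⟩ = Q.intro ⟨r' c, ψ⟩) ∧
    (∀ (T : Type u) (sup' : ∀ a : A', (B' a → T) → T),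
      (∀ (c : C') (φ : B' (l' c) → T) (ψ : B' (r' c) → T),
        sup' (l' c) φ = sup' (r' c) ψ) →
      ∃! h : Q.QW → T, ∀ (a : A') (f : B' a → Q.QW),
        h (Q.intro ⟨a, f⟩) = sup' a (fun x => h (f x))) := by
  constructor
  · intro c φ ψ
    have := Q.equate c (Sum.elim φ ψ)
    exact this
  · intro T sup' hcell
    have hsat : Sat (wsEqs A' B' C' l' r') (fun s : SPoly (wsSig A' B') T => sup' s.1 s.2) := by
      intro c ρ
      exact hcell c (fun y => ρ (Sum.inl y)) (fun y => ρ (Sum.inr y))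
    refine ⟨Q.qwrec T _ hsat, ?_, ?_⟩
    · intro a f
      exact Q.qwrechom T _ hsat ⟨a, f⟩
    · intro g hg
      exact (Q.qwuniq T _ hsat g (fun s => hg s.1 s.2)).symm
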